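/- Let C be a cluster produced by the greedy algorithm (so C was assembled by positive-gain merges from singletons) and let W₁,…,W_K be the clusters of any clustering W. Then |C| ≤ maxᵢ |C ∩ Wᵢ| + 2·|Γ⁺(C∩W₁, …, C∩W_K)|, where Γ⁺(S₁,…,S_m) denotes the set of positive edges with endpoints in two different sets Sᵢ, Sⱼ. -/

import Mathlib

/-- Edge pairs of the complete graph on `Fin n`. -/
def edgePairs (n : ℕ) : Finset (Fin n × Fin n) :=
  Finset.univ.filter (fun p => p.1 < p.2)

/-- The gain of merging clusters `S` and `T`. -/
def gain {n : ℕ} (pos : Fin n → Fin n → Bool) (S T : Finset (Fin n)) : ℤ :=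
  2 * ((S ×ˢ T).filter (fun p => pos p.1 p.2 = true)).card - S.card * T.card

/-- A cluster is greedy-built if it arises from singletons by merging disjoint
clusters, each time with strictly positive gain. -/
inductive GreedyBuilt {n : ℕ} (pos : Fin n → Fin n → Bool) : Finset (Fin n) → Prop
  | single (v : Fin n) : GreedyBuilt pos {v}
  | merge (S T : Finset (Fin n)) : GreedyBuilt pos S → GreedyBuilt pos T →
      Disjoint S T → 0 < gain pos S T → GreedyBuilt pos (S ∪ T)

open Finset

/-- for a greedy-built cluster `C` and any clustering `W`,
`|C| ≤ maxᵢ |C ∩ Wᵢ| + 2·|Γ⁺(C∩W₁, …, C∩W_K)|`. -/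

lemma greedy_arith {ι : Type*} [Fintype ι] [DecidableEq ι] (s t : ι → ℕ) (D P : ℕ)
    (hP : (∑ i, s i) * (∑ i, t i) < 2 * P)
    (hD : P ≤ D + ∑ i, s i * t i) :
    univ.sup s + univ.sup t ≤ univ.sup (fun i => s i + t i) + 2 * D := by
  classical
  cases isEmpty_or_nonempty ι with
  | inl h => simp [Finset.univ_eq_empty]
  | inr h =>
    by_cases hm : univ.sup s + univ.sup t ≤ univ.sup (fun i => s i + t i)
    · omega
    push_neg at hm
    obtain ⟨i0, -, hi0⟩ := Finset.exists_mem_eq_sup univ univ_nonempty s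
    obtain ⟨j0, -, hj0⟩ := Finset.exists_mem_eq_sup univ univ_nonempty t
    have hsupst : ∀ i, s i + t i ≤ univ.sup (fun i => s i + t i) := fun i =>
      Finset.le_sup (f := fun i => s i + t i) (mem_univ i)
    have hsb : ∀ i, t i ≤ univ.sup t := fun i => Finset.le_sup (mem_univ i)
    have hsa : ∀ i, s i ≤ univ.sup s := fun i => Finset.le_sup (mem_univ i)
    have hti0 : t i0 < univ.sup t := by
      have h1 := hsupst i0; omega
    have hsj0 : s j0 < univ.sup s := by
      have h1 := hsupst j0; omega
    have hne : i0 ≠ j0 := by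
      rintro rfl; omega
    -- pair bound
    have hpair : ∀ i, i ≠ j0 → t i + t j0 ≤ ∑ k, t k := by
      intro i hij
      calc t i + t j0 = ∑ k ∈ ({i, j0} : Finset ι), t k := (Finset.sum_pair hij).symm
        _ ≤ ∑ k, t k := Finset.sum_le_sum_of_subset (subset_univ _)
    -- integer key inequality
    set a := univ.sup s with ha
    set b := univ.sup t with hb
    have key : (b : ℤ) - t i0 ≤ (∑ i, (s i : ℤ)) * (∑ i, (t i : ℤ)) - 2 * ∑ i, (s i : ℤ) * t i := by
      set B : ℤ := ∑ i, (t i : ℤ) with hBdef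
      have hrw : (∑ i, (s i : ℤ)) * B - 2 * ∑ i, (s i : ℤ) * t i
          = ∑ i, (s i : ℤ) * (B - 2 * t i) := by
        rw [Finset.sum_mul]
        rw [Finset.mul_sum]
        rw [← Finset.sum_sub_distrib]
        congr 1; funext i; ring
      rw [hrw]
      have hBti : ∀ i, i ≠ j0 → (t i : ℤ) + b ≤ B := by
        intro i hij
        have h1 : (t i : ℤ) + (t j0 : ℤ) ≤ ∑ k, (t k : ℤ) := by exact_mod_cast hpair i hij
        have h2 : (b : ℤ) = (t j0 : ℤ) := by exact_mod_cast congrArg (Nat.cast (R := ℤ)) hj0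
        rw [hBdef]
        linarith
      have hj0mem : j0 ∈ univ.erase i0 := Finset.mem_erase.mpr ⟨Ne.symm hne, mem_univ _⟩
      rw [← Finset.add_sum_erase _ _ (mem_univ i0), ← Finset.add_sum_erase _ _ hj0mem]
      have hrest : (0:ℤ) ≤ ∑ i ∈ (univ.erase i0).erase j0, (s i : ℤ) * (B - 2 * t i) := by
        apply Finset.sum_nonneg
        intro i hi
        have hij : i ≠ j0 := (Finset.mem_erase.mp hi).1
        have h1 := hBti i hij
        have h2 : (t i : ℤ) ≤ b := by exact_mod_cast hsb i
        have : (0:ℤ) ≤ B - 2 * t i := by omega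
        positivity
      have h1le : (1:ℤ) ≤ (s i0 : ℤ) := by
        have : 1 ≤ a := by omega
        rw [hi0] at this; exact_mod_cast this
      have hBi0 : (t i0 : ℤ) + b ≤ B := hBti i0 hne
      have hti0b : (t i0 : ℤ) ≤ b := by exact_mod_cast hsb i0
      -- bound for i0 term:
      have hfi0 : (b : ℤ) - t i0 ≤ (s i0 : ℤ) * (B - 2 * t i0) := by
        have h2 : (b:ℤ) - t i0 ≤ B - 2 * t i0 := by omega
        have h3 : (0:ℤ) ≤ (b:ℤ) - t i0 := by omega
        nlinarith
      -- bound for j0 term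
      have hsj0le : (s j0 : ℤ) + 1 ≤ (s i0 : ℤ) := by
        have : s j0 + 1 ≤ a := by omega
        rw [hi0] at this; exact_mod_cast this
      have hj0t : (t j0 : ℤ) = b := by rw [hj0]
      by_cases hcase : 2 * (b:ℤ) ≤ B
      · have hfj0 : (0:ℤ) ≤ (s j0 : ℤ) * (B - 2 * t j0) := by
          have : (0:ℤ) ≤ B - 2 * t j0 := by omega
          positivity
        linarith
      · push_neg at hcase
        have e2 : (s i0 - 1) * (B - 2 * (b:ℤ)) ≤ (s j0 : ℤ) * (B - 2 * t j0) := by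
          rw [hj0t]
          apply mul_le_mul_of_nonpos_right (by omega) (by omega)
        have e3 : ((s i0 : ℤ) - 1) * ((t i0 : ℤ) - b) ≤ (s i0 - 1) * (B - 2 * (b:ℤ)) := by
          apply mul_le_mul_of_nonneg_left (by omega) (by omega)
        have e1 : (s i0 : ℤ) * ((b:ℤ) - t i0) ≤ (s i0 : ℤ) * (B - 2 * t i0) := by
          apply mul_le_mul_of_nonneg_left (by omega) (by omega)
        have e4 : (s i0 : ℤ) * ((b:ℤ) - t i0) + ((s i0 : ℤ) - 1) * ((t i0 : ℤ) - b) = (b:ℤ) - t i0 := by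
          ring
        linarith
    -- conclude
    have hcast1 : ((∑ i, s i : ℕ) : ℤ) = ∑ i, (s i : ℤ) := by push_cast; rfl
    have hcast2 : ((∑ i, t i : ℕ) : ℤ) = ∑ i, (t i : ℤ) := by push_cast; rfl
    have hcast3 : ((∑ i, s i * t i : ℕ) : ℤ) = ∑ i, (s i : ℤ) * t i := by push_cast; rfl
    have hPZ : ((∑ i, s i : ℕ) : ℤ) * ((∑ i, t i : ℕ) : ℤ) < 2 * (P : ℤ) := by exact_mod_cast hP
    have hDZ : (P : ℤ) ≤ (D : ℤ) + ((∑ i, s i * t i : ℕ) : ℤ) := by exact_mod_cast hD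
    rw [hcast1, hcast2] at hPZ
    rw [hcast3] at hDZ
    have hm2 : (s i0 : ℤ) + t i0 ≤ ((univ.sup (fun i => s i + t i) : ℕ) : ℤ) := by
      exact_mod_cast hsupst i0
    have hgoal : (a : ℤ) + b ≤ ((univ.sup (fun i => s i + t i) : ℕ) : ℤ) + 2 * D := by
      have hai0 : (a : ℤ) = s i0 := by rw [hi0]
      linarith
    exact_mod_cast hgoal

lemma sum_inter_card {n : ℕ} {ι : Type*} [Fintype ι] [DecidableEq ι]
    (W : ι → Finset (Fin n)) (hW : ∀ v : Fin n, ∃! i, v ∈ W i) (A : Finset (Fin n)) :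
    ∑ i, (A ∩ W i).card = A.card := by
  classical
  rw [← Finset.card_biUnion]
  · congr 1
    ext v
    simp only [Finset.mem_biUnion, Finset.mem_inter, Finset.mem_univ, true_and]
    constructor
    · rintro ⟨i, hv, -⟩; exact hv
    · intro hv; obtain ⟨i, hi, -⟩ := hW v; exact ⟨i, hv, hi⟩
  · intro i _ j _ hij
    simp only [Finset.disjoint_left, Finset.mem_inter]
    rintro v ⟨-, hvi⟩ ⟨-, hvj⟩
    obtain ⟨k, -, huniq⟩ := hW v
    exact hij ((huniq i hvi).trans (huniq j hvj).symm)

theorem greedy_cluster_bound {n : ℕ} {ι : Type*} [Fintype ι] [DecidableEq ι]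
    (pos : Fin n → Fin n → Bool) (_hsym : ∀ u v, pos u v = pos v u)
    (W : ι → Finset (Fin n)) (hW : ∀ v : Fin n, ∃! i, v ∈ W i)
    (C : Finset (Fin n)) (hC : GreedyBuilt pos C) :
    C.card ≤ (Finset.univ.sup fun i => (C ∩ W i).card) +
      2 * ((edgePairs n).filter
        (fun p => pos p.1 p.2 = true ∧
          ∃ i j, i ≠ j ∧ p.1 ∈ C ∩ W i ∧ p.2 ∈ C ∩ W j)).card := by
  classical
  induction hC with
  | single v =>
    obtain ⟨i, hi, -⟩ := hW v
    have h1 : ({v} : Finset (Fin n)) ∩ W i = {v} :=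
      Finset.inter_eq_left.mpr (Finset.singleton_subset_iff.mpr hi)
    have h2 : ({v} : Finset (Fin n)).card ≤ univ.sup (fun i => (({v} : Finset (Fin n)) ∩ W i).card) := by
      calc ({v} : Finset (Fin n)).card = (({v} : Finset (Fin n)) ∩ W i).card := by rw [h1]
        _ ≤ _ := Finset.le_sup (f := fun j => (({v} : Finset (Fin n)) ∩ W j).card) (mem_univ i)
    omega
  | merge S T hS hT hdis hg ihS ihT =>
    -- abbreviations
    set cross : Finset (Fin n) → Finset (Fin n × Fin n) := fun A =>
      (edgePairs n).filter
        (fun p => pos p.1 p.2 = true ∧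
          ∃ i j, i ≠ j ∧ p.1 ∈ A ∩ W i ∧ p.2 ∈ A ∩ W j) with hcross
    set mid : Finset (Fin n × Fin n) :=
      (edgePairs n).filter
        (fun p => pos p.1 p.2 = true ∧ (∃ i j, i ≠ j ∧ p.1 ∈ W i ∧ p.2 ∈ W j) ∧
          ((p.1 ∈ S ∧ p.2 ∈ T) ∨ (p.1 ∈ T ∧ p.2 ∈ S))) with hmid
    show (S ∪ T).card ≤ (univ.sup fun i => ((S ∪ T) ∩ W i).card) + 2 * (cross (S ∪ T)).card
    have ihS' : S.card ≤ (univ.sup fun i => (S ∩ W i).card) + 2 * (cross S).card := ihS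
    have ihT' : T.card ≤ (univ.sup fun i => (T ∩ W i).card) + 2 * (cross T).card := ihT
    have hcardU : (S ∪ T).card = S.card + T.card := Finset.card_union_of_disjoint hdis
    have hinter : ∀ i, ((S ∪ T) ∩ W i).card = (S ∩ W i).card + (T ∩ W i).card := by
      intro i
      rw [Finset.union_inter_distrib_right]
      exact Finset.card_union_of_disjoint
        (hdis.mono Finset.inter_subset_left Finset.inter_subset_left)
    -- the three edge sets are disjoint subsets of cross (S ∪ T)
    have hsubS : cross S ⊆ cross (S ∪ T) := by
      intro p hp
      simp only [hcross, Finset.mem_filter, Finset.mem_inter, Finset.mem_union] at hp ⊢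
      obtain ⟨hpe, hpos, i, j, hij, ⟨h1a, h1b⟩, ⟨h2a, h2b⟩⟩ := hp
      exact ⟨hpe, hpos, i, j, hij, ⟨Or.inl h1a, h1b⟩, ⟨Or.inl h2a, h2b⟩⟩
    have hsubT : cross T ⊆ cross (S ∪ T) := by
      intro p hp
      simp only [hcross, Finset.mem_filter, Finset.mem_inter, Finset.mem_union] at hp ⊢
      obtain ⟨hpe, hpos, i, j, hij, ⟨h1a, h1b⟩, ⟨h2a, h2b⟩⟩ := hp
      exact ⟨hpe, hpos, i, j, hij, ⟨Or.inr h1a, h1b⟩, ⟨Or.inr h2a, h2b⟩⟩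
    have hsubM : mid ⊆ cross (S ∪ T) := by
      intro p hp
      simp only [hmid, hcross, Finset.mem_filter, Finset.mem_inter, Finset.mem_union] at hp ⊢
      obtain ⟨hpe, hpos, ⟨i, j, hij, h1, h2⟩, hmem⟩ := hp
      refine ⟨hpe, hpos, i, j, hij, ⟨?_, h1⟩, ⟨?_, h2⟩⟩
      · rcases hmem with ⟨hx, -⟩ | ⟨hx, -⟩
        exacts [Or.inl hx, Or.inr hx]
      · rcases hmem with ⟨-, hy⟩ | ⟨-, hy⟩
        exacts [Or.inr hy, Or.inl hy]
    have hdST : Disjoint (cross S) (cross T) := by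
      rw [Finset.disjoint_left]
      rintro p hpS hpT
      simp only [hcross, Finset.mem_filter, Finset.mem_inter] at hpS hpT
      obtain ⟨-, -, i, j, -, ⟨h1, -⟩, -⟩ := hpS
      obtain ⟨-, -, i', j', -, ⟨h1', -⟩, -⟩ := hpT
      exact Finset.disjoint_left.mp hdis h1 h1'
    have hdSM : Disjoint (cross S ∪ cross T) mid := by
      rw [Finset.disjoint_left]
      rintro p hpU hpM
      simp only [hmid, Finset.mem_filter] at hpM
      obtain ⟨-, -, -, hmem⟩ := hpM
      rcases Finset.mem_union.mp hpU with hpS | hpS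
      · simp only [hcross, Finset.mem_filter, Finset.mem_inter] at hpS
        obtain ⟨-, -, i, j, -, ⟨h1, -⟩, ⟨h2, -⟩⟩ := hpS
        rcases hmem with ⟨-, hy⟩ | ⟨hx, -⟩
        · exact Finset.disjoint_left.mp hdis h2 hy
        · exact Finset.disjoint_left.mp hdis h1 hx
      · simp only [hcross, Finset.mem_filter, Finset.mem_inter] at hpS
        obtain ⟨-, -, i, j, -, ⟨h1, -⟩, ⟨h2, -⟩⟩ := hpS
        rcases hmem with ⟨hx, -⟩ | ⟨-, hy⟩
        · exact Finset.disjoint_left.mp hdis hx h1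
        · exact Finset.disjoint_left.mp hdis hy h2
    have hcount : (cross S).card + (cross T).card + mid.card ≤ (cross (S ∪ T)).card := by
      have h1 : (cross S ∪ cross T ∪ mid).card = (cross S).card + (cross T).card + mid.card := by
        rw [Finset.card_union_of_disjoint hdSM, Finset.card_union_of_disjoint hdST]
      rw [← h1]
      exact Finset.card_le_card (Finset.union_subset (Finset.union_subset hsubS hsubT) hsubM)
    -- positive pairs between S and T
    set PP : Finset (Fin n × Fin n) := (S ×ˢ T).filter (fun p => pos p.1 p.2 = true) with hPP
    have hgain : S.card * T.card < 2 * PP.card := by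
      have hg' := hg
      unfold gain at hg'
      zify
      linarith
    -- split PP into same-part and diff-part
    set samep : Fin n × Fin n → Prop := fun p => ∃ i, p.1 ∈ W i ∧ p.2 ∈ W i with hsamep
    have hPPsplit : (PP.filter samep).card + (PP.filter (fun p => ¬ samep p)).card = PP.card :=
      Finset.card_filter_add_card_filter_not _
    have hsame : (PP.filter samep).card ≤ ∑ i, (S ∩ W i).card * (T ∩ W i).card := by
      calc (PP.filter samep).card
          ≤ (univ.biUnion (fun i => (S ∩ W i) ×ˢ (T ∩ W i))).card := by
            apply Finset.card_le_card
            intro p hp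
            simp only [hPP, Finset.mem_filter, Finset.mem_product, hsamep] at hp
            obtain ⟨⟨⟨hp1, hp2⟩, -⟩, i, hi1, hi2⟩ := hp
            simp only [Finset.mem_biUnion, Finset.mem_univ, true_and, Finset.mem_product,
              Finset.mem_inter]
            exact ⟨i, ⟨hp1, hi1⟩, ⟨hp2, hi2⟩⟩
        _ ≤ ∑ i, ((S ∩ W i) ×ˢ (T ∩ W i)).card := Finset.card_biUnion_le
        _ = ∑ i, (S ∩ W i).card * (T ∩ W i).card := by
            simp [Finset.card_product]
    have hdiffb : (PP.filter (fun p => ¬ samep p)).card ≤ mid.card := by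
      apply Finset.card_le_card_of_injOn (fun p => if p.1 < p.2 then p else (p.2, p.1))
      · intro p hp
        simp only [hPP, Finset.mem_coe, Finset.mem_filter, Finset.mem_product, hsamep] at hp
        obtain ⟨⟨⟨hp1, hp2⟩, hpos⟩, hnsame⟩ := hp
        obtain ⟨i, hi, -⟩ := hW p.1
        obtain ⟨j, hj, -⟩ := hW p.2
        have hij : i ≠ j := by rintro rfl; exact hnsame ⟨i, hi, hj⟩
        have hne : p.1 ≠ p.2 := by
          rintro heq
          exact Finset.disjoint_left.mp hdis hp1 (heq ▸ hp2)
        simp only [hmid, Finset.mem_coe, Finset.mem_filter]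
        by_cases hlt : p.1 < p.2
        · simp only [if_pos hlt]
          refine ⟨?_, hpos, ⟨i, j, hij, hi, hj⟩, Or.inl ⟨hp1, hp2⟩⟩
          simp [edgePairs, hlt]
        · simp only [if_neg hlt]
          have hlt' : p.2 < p.1 := lt_of_le_of_ne (not_lt.mp hlt) (Ne.symm hne)
          refine ⟨?_, ?_, ⟨j, i, hij.symm, hj, hi⟩, Or.inr ⟨hp2, hp1⟩⟩
          · simp [edgePairs, hlt']
          · simpa using (_hsym p.1 p.2) ▸ hpos
      · intro p hp q hq hfeq
        simp only [hPP, Finset.mem_coe, Finset.mem_filter, Finset.mem_product] at hp hq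
        obtain ⟨⟨⟨hp1, hp2⟩, -⟩, -⟩ := hp
        obtain ⟨⟨⟨hq1, hq2⟩, -⟩, -⟩ := hq
        by_cases h1 : p.1 < p.2 <;> by_cases h2 : q.1 < q.2 <;>
          simp only [if_pos, if_neg, h1, h2, if_true, if_false] at hfeq
        · exact hfeq
        · exfalso
          have : p.1 = q.2 := congrArg Prod.fst hfeq
          exact Finset.disjoint_left.mp hdis hp1 (this ▸ hq2)
        · exfalso
          have : q.1 = p.2 := (congrArg Prod.fst hfeq).symm
          exact Finset.disjoint_left.mp hdis hq1 (this ▸ hp2)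
        · have e1 : p.2 = q.2 := congrArg Prod.fst hfeq
          have e2 : p.1 = q.1 := congrArg Prod.snd hfeq
          exact Prod.ext e2 e1
    -- apply the arithmetic lemma
    have hsumS := sum_inter_card W hW S
    have hsumT := sum_inter_card W hW T
    have hD2 : PP.card ≤ mid.card + ∑ i, (S ∩ W i).card * (T ∩ W i).card := by omega
    have harith : univ.sup (fun i => (S ∩ W i).card) + univ.sup (fun i => (T ∩ W i).card) ≤
        univ.sup (fun i => (S ∩ W i).card + (T ∩ W i).card) + 2 * mid.card :=
      greedy_arith (fun i => (S ∩ W i).card) (fun i => (T ∩ W i).card) mid.card PP.card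
        (by rw [hsumS, hsumT]; exact hgain) hD2
    -- final combination
    have hsupU : (univ.sup fun i => ((S ∪ T) ∩ W i).card) =
        univ.sup (fun i => (S ∩ W i).card + (T ∩ W i).card) :=
      Finset.sup_congr rfl (fun i _ => hinter i)
    rw [hsupU, hcardU]
    omega
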